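/- Let Q₀ ∈ 𝔻 and let ω be a finite Borel measure on Q₀ with ω ≪ μ on Q₀. Assume there exist K₀ ≥ 1 and θ > 0 such that 1 ≤ ω(Q₀)/μ(Q₀) ≤ K₀ and ω(F)/μ(Q₀) ≤ K₀ ( μ(F)/μ(Q₀) )^θ for every measurable F ⊆ Q₀. Then there exists K₁ ≥ 1, depending only on K₀ and θ, and a pairwise disjoint family 𝓕 = {Q_j} ⊆ 𝔻_{Q₀} ∖ {Q₀} such that μ( Q₀ ∖ ⋃_j Q_j ) ≥ K₁^{-1} μ(Q₀) and 1/2 ≤ ω(Q)/μ(Q) ≤ K₀ K₁ for every Q ∈ 𝔻_{𝓕, Q₀}. -/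

import Mathlib

open MeasureTheory Set
open scoped ENNReal

noncomputable section

/-- the stopping-time construction. Dyadic systems are modelled as
in STATEMENT 14: a countable index type `ι`, cubes `Q : ι → Set S` of positive
finite `μ`-measure and generations `gen : ι → ℤ`. Given a finite Borel measure
`ω` on the cube `Q i₀` with `ω ≪ μ` there, satisfying
`1 ≤ ω(Q₀)/μ(Q₀) ≤ K₀` and `ω(F)/μ(Q₀) ≤ K₀ (μ(F)/μ(Q₀))^θ` for all measurable
`F ⊆ Q₀`, there are `K₁ ≥ 1` (depending only on `K₀`, `θ`) and a pairwise
disjoint family `𝓕 ⊆ 𝔻_{Q₀} ∖ {Q₀}` with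
`μ(Q₀ ∖ ⋃ 𝓕) ≥ K₁⁻¹ μ(Q₀)` and `1/2 ≤ ω(Q)/μ(Q) ≤ K₀ K₁` for all `Q ∈ 𝔻_{𝓕,Q₀}`. -/
theorem statement15 (K₀ : ℝ≥0∞) (θ : ℝ) (hK₀ : 1 ≤ K₀) (hK₀' : K₀ < ∞) (hθ : 0 < θ) :
    ∃ K₁ : ℝ≥0∞, 1 ≤ K₁ ∧ K₁ < ∞ ∧
      ∀ (S ι : Type) [MeasurableSpace S] [Countable ι],
        ∀ (μ ω : Measure S) (Q : ι → Set S) (gen : ι → ℤ),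
          (∀ i, MeasurableSet (Q i)) →
          (∀ i, 0 < μ (Q i)) → (∀ i, μ (Q i) < ∞) →
          (∀ i j, gen i = gen j → Q i = Q j ∨ Disjoint (Q i) (Q j)) →
          (∀ i j, gen j ≤ gen i → Q i ⊆ Q j ∨ Disjoint (Q i) (Q j)) →
          ∀ i₀ : ι,
            -- ω is a finite Borel measure on Q i₀, absolutely continuous w.r.t. μ there
            IsFiniteMeasure ω → ω (Q i₀)ᶜ = 0 →
            (∀ F ⊆ Q i₀, μ F = 0 → ω F = 0) →
            -- 1 ≤ ω(Q₀)/μ(Q₀) ≤ K₀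
            1 ≤ ω (Q i₀) / μ (Q i₀) → ω (Q i₀) / μ (Q i₀) ≤ K₀ →
            -- ω(F)/μ(Q₀) ≤ K₀ (μ(F)/μ(Q₀))^θ for measurable F ⊆ Q₀
            (∀ F ⊆ Q i₀, MeasurableSet F →
              ω F / μ (Q i₀) ≤ K₀ * (μ F / μ (Q i₀)) ^ θ) →
            ∃ 𝓕 : Set ι,
              (∀ j ∈ 𝓕, Q j ⊆ Q i₀ ∧ gen i₀ ≤ gen j ∧ j ≠ i₀) ∧
              𝓕.PairwiseDisjoint Q ∧
              K₁⁻¹ * μ (Q i₀) ≤ μ (Q i₀ \ ⋃ j ∈ 𝓕, Q j) ∧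
              ∀ i, Q i ⊆ Q i₀ → gen i₀ ≤ gen i →
                (∀ j ∈ 𝓕, ¬(Q i ⊆ Q j ∧ gen j ≤ gen i)) →
                2⁻¹ ≤ ω (Q i) / μ (Q i) ∧ ω (Q i) / μ (Q i) ≤ K₀ * K₁ := by
  classical
  set K₁ : ℝ≥0∞ := (4 * K₀) ^ (1 / θ) with hK₁def
  have h4K₀0 : (4 * K₀ : ℝ≥0∞) ≠ 0 := by
    simp only [ne_eq, mul_eq_zero, not_or]
    exact ⟨by norm_num, by intro h; rw [h] at hK₀; simp at hK₀⟩
  have h4K₀top : (4 * K₀ : ℝ≥0∞) ≠ ∞ := ENNReal.mul_ne_top (by norm_num) hK₀'.ne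
  have h1θ : (0:ℝ) < 1 / θ := by positivity
  have hK₁1 : 1 ≤ K₁ := by
    calc (1:ℝ≥0∞) = 1 ^ (1/θ) := (ENNReal.one_rpow _).symm
    _ ≤ (4 * K₀) ^ (1/θ) := ENNReal.rpow_le_rpow (by
        calc (1:ℝ≥0∞) ≤ K₀ := hK₀
        _ = 1 * K₀ := (one_mul _).symm
        _ ≤ 4 * K₀ := by gcongr; norm_num) h1θ.le
  have hK₁top : K₁ < ∞ := ENNReal.rpow_lt_top_of_nonneg h1θ.le h4K₀top
  have hK₁0 : K₁ ≠ 0 := by intro h; rw [h] at hK₁1; simp at hK₁1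
  refine ⟨K₁, hK₁1, hK₁top, ?_⟩
  intro S ι _ _ μ ω Q gen hmeas hpos hfin hgeq hgle i₀ hωfin hωc hac hlow hup hHol
  obtain ⟨e, he⟩ := exists_injective_nat ι
  set C : ℝ≥0∞ := K₀ * K₁ with hCdef
  have hC1 : 1 ≤ C := one_le_mul hK₀ hK₁1
  have hC0 : C ≠ 0 := by intro h; rw [h] at hC1; simp at hC1
  have hCtop : C ≠ ∞ := ENNReal.mul_ne_top hK₀'.ne hK₁top.ne
  have hK₀C : K₀ ≤ C := le_mul_of_one_le_right (by positivity) hK₁1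
  have hK₀0 : K₀ ≠ 0 := by intro h; rw [h] at hK₀; simp at hK₀
  have hμ0 : ∀ i, μ (Q i) ≠ 0 := fun i => (hpos i).ne'
  have hμtop : ∀ i, μ (Q i) ≠ ∞ := fun i => (hfin i).ne
  -- cubes with the same set and generation have the same "badness" data
  set Bad : Set ι := {i | Q i ⊆ Q i₀ ∧ gen i₀ ≤ gen i ∧
      (ω (Q i) / μ (Q i) < 2⁻¹ ∨ C < ω (Q i) / μ (Q i))} with hBadDef
  set MaxBad : Set ι := {j | j ∈ Bad ∧ ∀ j' ∈ Bad, Q j ⊆ Q j' → gen j ≤ gen j'}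
    with hMaxBadDef
  set 𝓕 : Set ι := {j | j ∈ MaxBad ∧
      ∀ j' ∈ MaxBad, Q j' = Q j → gen j' = gen j → e j ≤ e j'} with h𝓕Def
  have h𝓕Max : 𝓕 ⊆ MaxBad := fun j hj => hj.1
  have h𝓕Bad : 𝓕 ⊆ Bad := fun j hj => hj.1.1
  -- every bad cube is contained in a cube of 𝓕 of smaller generation
  have key : ∀ i ∈ Bad, ∃ j ∈ 𝓕, Q i ⊆ Q j ∧ gen j ≤ gen i := by
    intro i hi
    obtain ⟨g, ⟨j₁, hj₁B, hj₁g, hj₁sub⟩, hgmin⟩ :=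
      Int.exists_least_of_bdd (P := fun g => ∃ j ∈ Bad, gen j = g ∧ Q i ⊆ Q j)
        ⟨gen i₀, fun z hz => by obtain ⟨j, hjB, hjg, _⟩ := hz; exact hjg ▸ hjB.2.1⟩
        ⟨gen i, i, hi, rfl, subset_rfl⟩
    have hj₁max : j₁ ∈ MaxBad := by
      refine ⟨hj₁B, fun j' hj' hsub => ?_⟩
      rw [hj₁g]
      exact hgmin _ ⟨j', hj', rfl, hj₁sub.trans hsub⟩
    -- choose minimal e within the class of j₁
    set Cls : Set ℕ := {m | ∃ j' ∈ MaxBad, Q j' = Q j₁ ∧ gen j' = gen j₁ ∧ e j' = m}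
      with hClsDef
    have hClsne : Cls.Nonempty := ⟨e j₁, j₁, hj₁max, rfl, rfl, rfl⟩
    obtain ⟨j, hjM, hjQ, hjg, hje⟩ := Nat.sInf_mem hClsne
    refine ⟨j, ⟨hjM, fun j' hj' hQ' hg' => ?_⟩, hjQ ▸ hj₁sub, ?_⟩
    · rw [hje]
      exact Nat.sInf_le ⟨j', hj', hQ'.trans hjQ, hg'.trans hjg, rfl⟩
    · rw [hjg, hj₁g]
      exact hgmin _ ⟨i, hi, rfl, subset_rfl⟩
  -- 𝓕 consists of cubes ≠ Q i₀, inside Q i₀, with gen ≥ gen i₀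
  have h𝓕prop : ∀ j ∈ 𝓕, Q j ⊆ Q i₀ ∧ gen i₀ ≤ gen j ∧ j ≠ i₀ := by
    intro j hj
    obtain ⟨hsub, hgen, hratio⟩ := h𝓕Bad hj
    refine ⟨hsub, hgen, fun hji => ?_⟩
    subst hji
    rcases hratio with h | h
    · exact absurd (hlow.trans_lt h) (by norm_num)
    · exact absurd (hup.trans hK₀C) h.not_ge
  -- pairwise disjointness
  have h𝓕disj : 𝓕.PairwiseDisjoint Q := by
    have main : ∀ j₁ ∈ 𝓕, ∀ j₂ ∈ 𝓕, j₁ ≠ j₂ → gen j₂ ≤ gen j₁ →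
        ¬Disjoint (Q j₁) (Q j₂) → False := by
      intro j₁ hj₁ j₂ hj₂ hne hg hnd
      have hsub : Q j₁ ⊆ Q j₂ := (hgle j₁ j₂ hg).resolve_right hnd
      have hg' : gen j₁ ≤ gen j₂ := hj₁.1.2 j₂ (h𝓕Bad hj₂) hsub
      have hQeq : Q j₁ = Q j₂ := by
        rcases hgeq j₁ j₂ (le_antisymm hg' hg) with h | h
        · exact h
        · exact absurd h hnd
      have h12 : e j₁ ≤ e j₂ := hj₁.2 j₂ hj₂.1 hQeq.symm (le_antisymm hg hg')
      have h21 : e j₂ ≤ e j₁ := hj₂.2 j₁ hj₁.1 hQeq (le_antisymm hg' hg)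
      exact hne (he (le_antisymm h12 h21))
    intro j₁ hj₁ j₂ hj₂ hne
    by_contra hnd
    rcases le_total (gen j₂) (gen j₁) with hg | hg
    · exact main j₁ hj₁ j₂ hj₂ hne hg hnd
    · exact main j₂ hj₂ j₁ hj₁ hne.symm hg (fun h => hnd h.symm)
  -- non-stopped cubes have good ratio
  have hgood : ∀ i, Q i ⊆ Q i₀ → gen i₀ ≤ gen i →
      (∀ j ∈ 𝓕, ¬(Q i ⊆ Q j ∧ gen j ≤ gen i)) →
      2⁻¹ ≤ ω (Q i) / μ (Q i) ∧ ω (Q i) / μ (Q i) ≤ K₀ * K₁ := by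
    intro i hsub hgen hnostop
    by_contra hcon
    have hbad : i ∈ Bad := by
      refine ⟨hsub, hgen, ?_⟩
      rcases not_and_or.mp hcon with h | h
      · exact Or.inl (lt_of_not_ge h)
      · exact Or.inr (lt_of_not_ge h)
    obtain ⟨j, hj, hQsub, hgle'⟩ := key i hbad
    exact hnostop j hj ⟨hQsub, hgle'⟩
  -- measure estimate
  have h𝓕count : 𝓕.Countable := Set.to_countable 𝓕
  set FL : Set ι := {j ∈ 𝓕 | ω (Q j) / μ (Q j) < 2⁻¹} with hFLdef
  set FH : Set ι := {j ∈ 𝓕 | C < ω (Q j) / μ (Q j)} with hFHdef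
  have hFLc : FL.Countable := h𝓕count.mono (fun j hj => hj.1)
  have hFHc : FH.Countable := h𝓕count.mono (fun j hj => hj.1)
  have hFLd : FL.PairwiseDisjoint Q := h𝓕disj.subset (fun j hj => hj.1)
  have hFHd : FH.PairwiseDisjoint Q := h𝓕disj.subset (fun j hj => hj.1)
  have hUsplit : (⋃ j ∈ 𝓕, Q j) = (⋃ j ∈ FL, Q j) ∪ (⋃ j ∈ FH, Q j) := by
    ext x
    simp only [mem_iUnion, mem_union, exists_prop]
    constructor
    · rintro ⟨j, hj, hx⟩
      rcases (h𝓕Bad hj).2.2 with h | h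
      · exact Or.inl ⟨j, ⟨hj, h⟩, hx⟩
      · exact Or.inr ⟨j, ⟨hj, h⟩, hx⟩
    · rintro (⟨j, hj, hx⟩ | ⟨j, hj, hx⟩) <;> exact ⟨j, hj.1, hx⟩
  have hULsub : (⋃ j ∈ FL, Q j) ⊆ Q i₀ := by
    refine iUnion₂_subset fun j hj => (h𝓕prop j hj.1).1
  have hUHsub : (⋃ j ∈ FH, Q j) ⊆ Q i₀ := by
    refine iUnion₂_subset fun j hj => (h𝓕prop j hj.1).1
  have hULmeas : MeasurableSet (⋃ j ∈ FL, Q j) :=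
    MeasurableSet.biUnion hFLc (fun j _ => hmeas j)
  have hUHmeas : MeasurableSet (⋃ j ∈ FH, Q j) :=
    MeasurableSet.biUnion hFHc (fun j _ => hmeas j)
  -- ω of the low part
  have hωL : ω (⋃ j ∈ FL, Q j) ≤ 2⁻¹ * μ (Q i₀) := by
    calc ω (⋃ j ∈ FL, Q j) ≤ ∑' j : FL, ω (Q j) := measure_biUnion_le ω hFLc Q
    _ ≤ ∑' j : FL, 2⁻¹ * μ (Q (j : ι)) := by
        refine ENNReal.tsum_le_tsum fun j => ?_
        have := j.2.2
        rw [ENNReal.div_lt_iff (Or.inl (hμ0 j)) (Or.inl (hμtop j))] at this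
        exact this.le
    _ = 2⁻¹ * ∑' j : FL, μ (Q (j : ι)) := by rw [ENNReal.tsum_mul_left]
    _ = 2⁻¹ * μ (⋃ j ∈ FL, Q j) := by
        rw [measure_biUnion hFLc hFLd (fun j _ => hmeas j)]
    _ ≤ 2⁻¹ * μ (Q i₀) := mul_le_mul_right (measure_mono hULsub) _
  -- μ of the high part
  have hμH : μ (⋃ j ∈ FH, Q j) ≤ C⁻¹ * K₀ * μ (Q i₀) := by
    have hωQ₀ : ω (Q i₀) ≤ K₀ * μ (Q i₀) := by
      rw [ENNReal.div_le_iff_le_mul (Or.inl (hμ0 i₀)) (Or.inl (hμtop i₀))] at hup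
      exact hup
    calc μ (⋃ j ∈ FH, Q j) = ∑' j : FH, μ (Q (j : ι)) :=
        measure_biUnion hFHc hFHd (fun j _ => hmeas j)
    _ ≤ ∑' j : FH, C⁻¹ * ω (Q (j : ι)) := by
        refine ENNReal.tsum_le_tsum fun j => ?_
        have hj := j.2.2
        have : C * μ (Q (j:ι)) ≤ ω (Q (j:ι)) := by
          rw [← ENNReal.le_div_iff_mul_le (Or.inl (hμ0 _)) (Or.inl (hμtop _))]
          exact hj.le
        calc μ (Q (j:ι)) = C⁻¹ * (C * μ (Q (j:ι))) := by
              rw [← mul_assoc, ENNReal.inv_mul_cancel hC0 hCtop, one_mul]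
        _ ≤ C⁻¹ * ω (Q (j:ι)) := by gcongr
    _ = C⁻¹ * ∑' j : FH, ω (Q (j : ι)) := by rw [ENNReal.tsum_mul_left]
    _ = C⁻¹ * ω (⋃ j ∈ FH, Q j) := by
        rw [measure_biUnion hFHc hFHd (fun j _ => hmeas j)]
    _ ≤ C⁻¹ * ω (Q i₀) := mul_le_mul_right (measure_mono hUHsub) _
    _ ≤ C⁻¹ * (K₀ * μ (Q i₀)) := by gcongr
    _ = C⁻¹ * K₀ * μ (Q i₀) := by ring
  -- ω of the high part, via Hölder
  have hK₁θ : K₁ ^ θ = 4 * K₀ := by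
    rw [hK₁def, ← ENNReal.rpow_mul, one_div_mul_cancel hθ.ne', ENNReal.rpow_one]
  have hωH : ω (⋃ j ∈ FH, Q j) ≤ 4⁻¹ * μ (Q i₀) := by
    have hHolH := hHol _ hUHsub hUHmeas
    have hratio : μ (⋃ j ∈ FH, Q j) / μ (Q i₀) ≤ K₁⁻¹ := by
      rw [ENNReal.div_le_iff_le_mul (Or.inl (hμ0 i₀)) (Or.inl (hμtop i₀))]
      calc μ (⋃ j ∈ FH, Q j) ≤ C⁻¹ * K₀ * μ (Q i₀) := hμH
      _ = K₁⁻¹ * μ (Q i₀) := by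
          congr 1
          rw [hCdef, ENNReal.mul_inv (Or.inl hK₀0) (Or.inl hK₀'.ne)]
          rw [mul_comm K₀⁻¹ K₁⁻¹, mul_assoc, ENNReal.inv_mul_cancel hK₀0 hK₀'.ne,
            mul_one]
    have hstep : ω (⋃ j ∈ FH, Q j) / μ (Q i₀) ≤ 4⁻¹ := by
      calc ω (⋃ j ∈ FH, Q j) / μ (Q i₀) ≤ K₀ * (μ (⋃ j ∈ FH, Q j) / μ (Q i₀)) ^ θ :=
          hHolH
      _ ≤ K₀ * (K₁⁻¹) ^ θ := mul_le_mul_right (ENNReal.rpow_le_rpow hratio hθ.le) _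
      _ = K₀ * (4 * K₀)⁻¹ := by rw [ENNReal.inv_rpow, hK₁θ]
      _ = 4⁻¹ := by
          rw [ENNReal.mul_inv (Or.inr hK₀'.ne) (Or.inr hK₀0), mul_comm (4⁻¹ : ℝ≥0∞),
            ← mul_assoc, ENNReal.mul_inv_cancel hK₀0 hK₀'.ne, one_mul]
    rw [ENNReal.div_le_iff_le_mul (Or.inl (hμ0 i₀)) (Or.inl (hμtop i₀))] at hstep
    exact hstep
  -- lower bound for μ (Q i₀ \ ⋃ 𝓕)
  have hμω : μ (Q i₀) ≤ ω (Q i₀) := by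
    rw [ENNReal.le_div_iff_mul_le (Or.inl (hμ0 i₀)) (Or.inl (hμtop i₀))] at hlow
    rw [one_mul] at hlow
    exact hlow
  set U : Set S := ⋃ j ∈ 𝓕, Q j with hUdef
  have hUQ : U ⊆ Q i₀ := by rw [hUsplit]; exact union_subset hULsub hUHsub
  have hUmeas : MeasurableSet U := by rw [hUsplit]; exact hULmeas.union hUHmeas
  have hωrest : 4⁻¹ * μ (Q i₀) ≤ ω (Q i₀ \ U) := by
    have hcover : ω (Q i₀) ≤ ω (Q i₀ \ U) + (2⁻¹ * μ (Q i₀) + 4⁻¹ * μ (Q i₀)) := by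
      calc ω (Q i₀) ≤ ω ((Q i₀ \ U) ∪ U) := measure_mono (by
          intro x hx
          by_cases hxU : x ∈ U
          · exact Or.inr hxU
          · exact Or.inl ⟨hx, hxU⟩)
      _ ≤ ω (Q i₀ \ U) + ω U := measure_union_le _ _
      _ ≤ ω (Q i₀ \ U) + (2⁻¹ * μ (Q i₀) + 4⁻¹ * μ (Q i₀)) := by
          gcongr
          calc ω U = ω ((⋃ j ∈ FL, Q j) ∪ (⋃ j ∈ FH, Q j)) := by rw [hUsplit]
          _ ≤ ω (⋃ j ∈ FL, Q j) + ω (⋃ j ∈ FH, Q j) := measure_union_le _ _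
          _ ≤ 2⁻¹ * μ (Q i₀) + 4⁻¹ * μ (Q i₀) := add_le_add hωL hωH
    have hsum : (4⁻¹ : ℝ≥0∞) * μ (Q i₀) + (2⁻¹ * μ (Q i₀) + 4⁻¹ * μ (Q i₀))
        = μ (Q i₀) := by
      rw [← add_mul, ← add_mul, ← add_assoc]
      have h44 : (4:ℝ≥0∞)⁻¹ + 4⁻¹ = 2⁻¹ := by
        rw [show (4:ℝ≥0∞) = 2*2 by norm_num,
          ENNReal.mul_inv (Or.inl two_ne_zero) (Or.inl ENNReal.ofNat_ne_top),
          ← mul_add, ENNReal.inv_two_add_inv_two, mul_one]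
      rw [add_right_comm, h44, ENNReal.inv_two_add_inv_two, one_mul]
    have hfin' : (2⁻¹ : ℝ≥0∞) * μ (Q i₀) + 4⁻¹ * μ (Q i₀) ≠ ∞ := by
      refine ENNReal.add_ne_top.mpr ⟨?_, ?_⟩ <;>
        exact ENNReal.mul_ne_top (by norm_num) (hμtop i₀)
    exact (ENNReal.add_le_add_iff_right hfin').mp
      (hsum.le.trans (hμω.trans hcover))
  have hμrest : K₁⁻¹ * μ (Q i₀) ≤ μ (Q i₀ \ U) := by
    have hFsub : Q i₀ \ U ⊆ Q i₀ := diff_subset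
    have hFmeas : MeasurableSet (Q i₀ \ U) := (hmeas i₀).diff hUmeas
    have hHolF := hHol _ hFsub hFmeas
    have h4 : (4 * K₀)⁻¹ ≤ (μ (Q i₀ \ U) / μ (Q i₀)) ^ θ := by
      have h1 : (4⁻¹ : ℝ≥0∞) ≤ ω (Q i₀ \ U) / μ (Q i₀) := by
        rw [ENNReal.le_div_iff_mul_le (Or.inl (hμ0 i₀)) (Or.inl (hμtop i₀))]
        exact hωrest
      have h2 := h1.trans hHolF
      rw [ENNReal.mul_inv (Or.inr hK₀'.ne) (Or.inr hK₀0)]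
      calc (4⁻¹ : ℝ≥0∞) * K₀⁻¹ ≤ K₀ * (μ (Q i₀ \ U) / μ (Q i₀)) ^ θ * K₀⁻¹ :=
          mul_le_mul_left h2 _
      _ = (μ (Q i₀ \ U) / μ (Q i₀)) ^ θ * (K₀ * K₀⁻¹) := by ring
      _ = (μ (Q i₀ \ U) / μ (Q i₀)) ^ θ := by
          rw [ENNReal.mul_inv_cancel hK₀0 hK₀'.ne, mul_one]
    have h5 : K₁⁻¹ ≤ μ (Q i₀ \ U) / μ (Q i₀) := by
      have := ENNReal.rpow_le_rpow h4 h1θ.le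
      rwa [← ENNReal.rpow_mul, mul_one_div_cancel hθ.ne', ENNReal.rpow_one,
        ENNReal.inv_rpow, ← hK₁def] at this
    rwa [ENNReal.le_div_iff_mul_le (Or.inl (hμ0 i₀)) (Or.inl (hμtop i₀))] at h5
  exact ⟨𝓕, h𝓕prop, h𝓕disj, hμrest, hgood⟩
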